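/- For every m ≥ 0, Σ_{n=0}^{m} (−1)^n · binom(m+1, n+1) / (2n+1) = 2^{m+1} (m+1)! / (2m+1)!! − 1. -/
import Mathlib

open Finset

/-- `oddDF n = (2n−1)!!`, with the convention `(−1)!! = 1`; so `(2m+1)!! = oddDF (m+1)`. -/
def oddDF : ℕ → ℕ
  | 0 => 1
  | n + 1 => (2 * n + 1) * oddDF n

lemma oddDF_pos (n : ℕ) : 0 < oddDF n := by
  induction n with
  | zero => simp [oddDF]
  | succ n ih => simp [oddDF]; positivity

lemma key (n : ℕ) : ∀ x : ℚ, 0 < x →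
    ∑ k ∈ range (n + 1), (-1 : ℚ) ^ k * (n.choose k : ℚ) / (x + k)
      = (n.factorial : ℚ) / ∏ j ∈ range (n + 1), (x + j) := by
  induction n with
  | zero => intro x hx; simp
  | succ n ih =>
    intro x hx
    have hx1 : (0:ℚ) < x + 1 := by linarith
    have hA : (0:ℚ) < ∏ j ∈ range (n + 1), (x + j) := by
      apply Finset.prod_pos; intro j _; positivity
    have hB : (0:ℚ) < ∏ j ∈ range (n + 1), (x + 1 + j) := by
      apply Finset.prod_pos; intro j _; positivity
    have h1 : ∏ j ∈ range (n + 2), (x + j)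
        = (∏ j ∈ range (n + 1), (x + j)) * (x + n + 1) := by
      rw [Finset.prod_range_succ]; push_cast; ring
    have h2 : ∏ j ∈ range (n + 2), (x + j)
        = x * ∏ j ∈ range (n + 1), (x + 1 + j) := by
      rw [Finset.prod_range_succ']
      have : ∀ j ∈ range (n+1), (x + ((j:ℕ)+1 : ℕ)) = (x + 1 + j) := by
        intro j _; push_cast; ring
      rw [Finset.prod_congr rfl this]
      push_cast; ring
    have hrel : (∏ j ∈ range (n + 1), (x + j)) * (x + n + 1)
        = x * ∏ j ∈ range (n + 1), (x + 1 + j) := by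
      rw [← h1, h2]
    -- split the sum
    have hsplit : ∑ k ∈ range (n + 2), (-1 : ℚ) ^ k * ((n+1).choose k : ℚ) / (x + k)
        = (∑ k ∈ range (n + 1), (-1 : ℚ) ^ k * (n.choose k : ℚ) / (x + k))
          - ∑ k ∈ range (n + 1), (-1 : ℚ) ^ k * (n.choose k : ℚ) / (x + 1 + k) := by
      rw [Finset.sum_range_succ' (fun k => (-1 : ℚ) ^ k * ((n+1).choose k : ℚ) / (x + k))]
      have e1 : ∀ k ∈ range (n+1),
          (-1 : ℚ) ^ (k+1) * ((n+1).choose (k+1) : ℚ) / (x + ((k:ℕ)+1 : ℕ))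
          = ((-1 : ℚ) ^ (k+1) * (n.choose (k+1) : ℚ) / (x + (k+1))
            + (-1) * ((-1 : ℚ) ^ k * (n.choose k : ℚ) / (x + 1 + k))) := by
        intro k _
        rw [Nat.choose_succ_succ]
        push_cast
        have hk : (0:ℚ) < x + (k+1) := by positivity
        field_simp
        ring
      rw [Finset.sum_congr rfl e1, Finset.sum_add_distrib]
      have e2 : (∑ k ∈ range (n+1), (-1 : ℚ) ^ (k+1) * (n.choose (k+1) : ℚ) / (x + ((k:ℚ)+1)))
          + (-1:ℚ)^0 * ((n+1).choose 0 : ℚ) / (x + ((0:ℕ):ℚ))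
          = ∑ k ∈ range (n + 1), (-1 : ℚ) ^ k * (n.choose k : ℚ) / (x + k) := by
        have h := Finset.sum_range_succ'
          (fun k => (-1 : ℚ) ^ k * (n.choose k : ℚ) / (x + k)) (n+1)
        rw [Finset.sum_range_succ (fun k => (-1 : ℚ) ^ k * (n.choose k : ℚ) / (x + k)) (n+1)]
          at h
        simp only [Nat.choose_succ_self, Nat.choose_zero_right, Nat.cast_zero, Nat.cast_one,
          Nat.cast_ofNat] at h ⊢
        push_cast at h ⊢
        simp only [mul_zero, zero_mul, zero_div, mul_one, add_zero] at h ⊢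
        linarith [h]
      have e3 : (∑ k ∈ range (n+1),
            (-1:ℚ) * ((-1 : ℚ) ^ k * (n.choose k : ℚ) / (x + 1 + k)))
          = - ∑ k ∈ range (n + 1), (-1 : ℚ) ^ k * (n.choose k : ℚ) / (x + 1 + k) := by
        simp [neg_one_mul]
      push_cast at e2 ⊢
      linarith [e2, e3]
    rw [hsplit, ih x hx, ih (x+1) hx1]
    rw [h1]
    rw [div_sub_div _ _ (ne_of_gt hA) (ne_of_gt hB)]
    rw [div_eq_div_iff (by positivity) (by positivity)]
    push_cast [Nat.factorial_succ]
    linear_combination (-(n.factorial : ℚ)) * (∏ j ∈ range (n + 1), (x + j)) * hrel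

lemma prodHalf (n : ℕ) :
    ∏ j ∈ range (n + 1), ((1:ℚ)/2 + j) = (oddDF (n+1) : ℚ) / 2 ^ (n+1) := by
  induction n with
  | zero => simp [oddDF]
  | succ n ih =>
    rw [Finset.prod_range_succ, ih]
    show _ = ((( 2 * (n+1) + 1) * oddDF (n+1) : ℕ) : ℚ) / _
    push_cast
    field_simp
    ring

lemma Tsum (n : ℕ) :
    ∑ k ∈ range (n + 1), (-1 : ℚ) ^ k * (n.choose k : ℚ) / (2 * (k:ℚ) + 1)
      = 2 ^ n * (n.factorial : ℚ) / (oddDF (n+1) : ℚ) := by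
  have h := key n (1/2) (by norm_num)
  rw [prodHalf] at h
  have e : ∀ k ∈ range (n+1), (-1 : ℚ) ^ k * (n.choose k : ℚ) / (2 * (k:ℚ) + 1)
      = (1/2) * ((-1 : ℚ) ^ k * (n.choose k : ℚ) / ((1:ℚ)/2 + k)) := by
    intro k _
    have h2 : (0:ℚ) < 2 * (k:ℚ) + 1 := by positivity
    have h3 : ((1:ℚ)/2 + (k:ℚ)) ≠ 0 := by positivity
    rw [div_eq_iff (ne_of_gt h2), mul_comm ((1:ℚ)/2), mul_div_assoc, mul_assoc,
      div_mul_eq_mul_div, mul_comm _ ((2:ℚ)*k+1), mul_div_assoc,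
      show (2*(k:ℚ)+1) * (1/2) = 1/2 + k by ring, mul_assoc,
      div_mul_cancel₀ _ h3]
  rw [Finset.sum_congr rfl e, ← Finset.mul_sum, h]
  have hodd : (0:ℚ) < (oddDF (n+1) : ℚ) := by exact_mod_cast oddDF_pos (n+1)
  field_simp
  ring

/-- For every `m ≥ 0`,
`∑_{n=0}^{m} (−1)^n binom(m+1, n+1)/(2n+1) = 2^{m+1}(m+1)!/(2m+1)!! − 1`. -/
theorem alternating_binomial_double_factorial (m : ℕ) :
    ∑ n ∈ Finset.range (m + 1),
        (-1 : ℚ) ^ n * ((m + 1).choose (n + 1) : ℚ) / (2 * (n : ℚ) + 1)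
      = 2 ^ (m + 1) * (Nat.factorial (m + 1) : ℚ) / (oddDF (m + 1) : ℚ) - 1 := by
  induction m with
  | zero => simp [oddDF, Nat.factorial]; norm_num
  | succ m ih =>
    have hodd1 : (0:ℚ) < (oddDF (m+1) : ℚ) := by exact_mod_cast oddDF_pos (m+1)
    have hodd2 : (0:ℚ) < (oddDF (m+2) : ℚ) := by exact_mod_cast oddDF_pos (m+2)
    have pascal : ∀ n ∈ range (m+2),
        (-1 : ℚ) ^ n * ((m + 2).choose (n + 1) : ℚ) / (2 * (n : ℚ) + 1)
        = (-1 : ℚ) ^ n * ((m + 1).choose n : ℚ) / (2 * (n : ℚ) + 1)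
          + (-1 : ℚ) ^ n * ((m + 1).choose (n + 1) : ℚ) / (2 * (n : ℚ) + 1) := by
      intro n _
      rw [Nat.choose_succ_succ]
      push_cast
      ring
    rw [Finset.sum_congr rfl pascal, Finset.sum_add_distrib, Tsum (m+1)]
    have hS : ∑ n ∈ range (m+2),
        (-1 : ℚ) ^ n * ((m + 1).choose (n + 1) : ℚ) / (2 * (n : ℚ) + 1)
        = ∑ n ∈ range (m+1),
          (-1 : ℚ) ^ n * ((m + 1).choose (n + 1) : ℚ) / (2 * (n : ℚ) + 1) := by
      rw [Finset.sum_range_succ]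
      simp [Nat.choose_eq_zero_of_lt (by omega : m + 1 < m + 2)]
    rw [hS, ih]
    have hrec : ((oddDF (m+2) : ℕ) : ℚ) = (2 * (m+1) + 1) * (oddDF (m+1) : ℚ) := by
      show (((2 * (m+1) + 1) * oddDF (m+1) : ℕ) : ℚ) = _
      push_cast; ring
    have hfac : ((Nat.factorial (m+2) : ℕ) : ℚ) = (m+2) * (Nat.factorial (m+1) : ℚ) := by
      rw [Nat.factorial_succ]; push_cast; ring
    rw [hfac, hrec]
    have h3 : (0:ℚ) < 2 * ((m:ℚ)+1) + 1 := by positivity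
    field_simp
    ring
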